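/- Let T : V → W be a continuous K-linear map of pro-finite-dimensional spaces presented by compatible finite-level maps T_i : V_i → W_i, and let ℓ(i) ≥ i be chosen so that q^j_i(ker T_j) = q^{ℓ(i)}_i(ker T_{ℓ(i)}) for all j ≥ ℓ(i). Then the projection of the kernel satisfies Q_i(ker T) = q^{ℓ(i)}_i(ker T_{ℓ(i)}) for every i: every element of the stabilized image of kernels at level i lifts to an element of ker T in the inverse limit. -/

import Mathlib

/-- The inverse limit of an inverse sequence of `K`-modules along the connecting
maps `q i : V (i+1) → V i`, realized as the submodule of consistent sequences in
the product `∀ i, V i`. -/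
def invLim (K : Type) [Field K] (V : ℕ → Type) [∀ i, AddCommGroup (V i)]
    [∀ i, Module K (V i)] (q : ∀ i, V (i + 1) →ₗ[K] V i) : Submodule K (∀ i, V i) where
  carrier := {v | ∀ i, q i (v (i + 1)) = v i}
  add_mem' := by intro a b ha hb i; simp [ha i, hb i]
  zero_mem' := by intro i; simp
  smul_mem' := by intro c a ha i; simp [ha i]

/-- The canonical projection `Q i` from the inverse limit to the `i`-th stage. -/
def invLimProj (K : Type) [Field K] (V : ℕ → Type) [∀ i, AddCommGroup (V i)]
    [∀ i, Module K (V i)] (q : ∀ i, V (i + 1) →ₗ[K] V i) (i : ℕ) :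
    ↥(invLim K V q) →ₗ[K] V i :=
  (LinearMap.proj i).comp (invLim K V q).subtype

/-- The composite connecting map `q^j_i : V j → V i` for `i ≤ j`. -/
def qIter (K : Type) [Field K] (V : ℕ → Type) [∀ i, AddCommGroup (V i)]
    [∀ i, Module K (V i)] (q : ∀ i, V (i + 1) →ₗ[K] V i) (i : ℕ) :
    ∀ j, i ≤ j → (V j →ₗ[K] V i)
  | 0, h => by
    have hi : i = 0 := Nat.le_zero.mp h
    subst hi; exact LinearMap.id
  | j + 1, h =>
    if heq : i = j + 1 then by subst heq; exact LinearMap.id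
    else (qIter K V q i j (by omega)).comp (q j)


section Aux
variable (K : Type) [Field K] (V : ℕ → Type) [∀ i, AddCommGroup (V i)]
    [∀ i, Module K (V i)] (q : ∀ i, V (i + 1) →ₗ[K] V i)

lemma qIter_self (i : ℕ) (h : i ≤ i) (y : V i) : qIter K V q i i h y = y := by
  cases i <;> simp [qIter]

lemma qIter_succ (i j : ℕ) (h : i ≤ j) (h2 : i ≤ j + 1) (y : V (j + 1)) :
    qIter K V q i (j + 1) h2 y = qIter K V q i j h (q j y) := by
  rw [qIter, dif_neg (by omega : ¬ i = j + 1)]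
  rfl

lemma qIter_comp (i j : ℕ) (h1 : i ≤ j) : ∀ (k : ℕ) (h2 : j ≤ k) (y : V k),
    qIter K V q i j h1 (qIter K V q j k h2 y) = qIter K V q i k (h1.trans h2) y := by
  intro k
  induction k with
  | zero =>
    intro h2 y
    have hj : j = 0 := Nat.le_zero.mp h2
    subst hj
    rw [qIter_self]
  | succ k ih =>
    intro h2 y
    by_cases hj : j = k + 1
    · subst hj
      rw [qIter_self]
    · have hjk : j ≤ k := by omega
      rw [qIter_succ K V q j k hjk h2, qIter_succ K V q i k (h1.trans hjk) (h1.trans h2),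
        ih hjk]

lemma qIter_lim (v : ∀ i, V i) (hv : ∀ i, q i (v (i + 1)) = v i) :
    ∀ (j i : ℕ) (h : i ≤ j), qIter K V q i j h (v j) = v i := by
  intro j
  induction j with
  | zero =>
    intro i h
    have hi : i = 0 := Nat.le_zero.mp h
    subst hi
    rw [qIter_self]
  | succ j ih =>
    intro i h
    by_cases hi : i = j + 1
    · subst hi
      rw [qIter_self]
    · rw [qIter_succ K V q i j (by omega) h, hv j, ih i (by omega)]

end Aux

/-- With `T : V → W` a continuous linear map of pro-finite-dimensional
spaces presented by compatible finite-level maps `T_i : V_i → W_i`, and `ℓ(i) ≥ i`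
chosen so that `q^j_i (ker T_j) = q^{ℓ(i)}_i (ker T_{ℓ(i)})` for all `j ≥ ℓ(i)`,
the projection of the kernel satisfies `Q_i (ker T) = q^{ℓ(i)}_i (ker T_{ℓ(i)})`
for every `i`. -/
theorem stmt6 (K : Type) [Field K] [TopologicalSpace K] [IsTopologicalDivisionRing K]
    [T2Space K]
    (n : ℕ → ℕ) (q : ∀ i, (Fin (n (i + 1)) → K) →ₗ[K] (Fin (n i) → K))
    (hq : ∀ i, Continuous (q i))
    (m : ℕ → ℕ) (r : ∀ i, (Fin (m (i + 1)) → K) →ₗ[K] (Fin (m i) → K))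
    (hr : ∀ i, Continuous (r i))
    (T : ↥(invLim K (fun i => Fin (n i) → K) q) →ₗ[K]
      ↥(invLim K (fun i => Fin (m i) → K) r))
    (hT : Continuous T)
    (Ti : ∀ i, (Fin (n i) → K) →ₗ[K] (Fin (m i) → K))
    (hcomm : ∀ i v, invLimProj K (fun i => Fin (m i) → K) r i (T v) =
        Ti i (invLimProj K (fun i => Fin (n i) → K) q i v))
    (hcompat : ∀ i j (h : i ≤ j),
        (qIter K (fun i => Fin (m i) → K) r i j h).comp (Ti j) =
          (Ti i).comp (qIter K (fun i => Fin (n i) → K) q i j h))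
    (ℓ : ℕ → ℕ) (hℓ : ∀ i, i ≤ ℓ i)
    (hstab : ∀ i j (h : ℓ i ≤ j),
        Submodule.map (qIter K (fun i => Fin (n i) → K) q i j ((hℓ i).trans h))
            (LinearMap.ker (Ti j)) =
          Submodule.map (qIter K (fun i => Fin (n i) → K) q i (ℓ i) (hℓ i))
            (LinearMap.ker (Ti (ℓ i)))) :
    ∀ i, (invLimProj K (fun i => Fin (n i) → K) q i) ''
          (LinearMap.ker T : Set ↥(invLim K (fun i => Fin (n i) → K) q)) =
        (qIter K (fun i => Fin (n i) → K) q i (ℓ i) (hℓ i)) ''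
          (LinearMap.ker (Ti (ℓ i)) : Set (Fin (n (ℓ i)) → K)) := by
  intro i
  ext x
  simp only [Set.mem_image, SetLike.mem_coe, LinearMap.mem_ker]
  constructor
  · rintro ⟨v, hv, rfl⟩
    refine ⟨v.1 (ℓ i), ?_, ?_⟩
    · have h1 := hcomm (ℓ i) v
      rw [hv] at h1
      simpa [invLimProj] using h1.symm
    · exact qIter_lim K (fun i => Fin (n i) → K) q v.1 v.2 (ℓ i) i (hℓ i)
  · rintro ⟨w0, hw0, rfl⟩
    have hxK : qIter K (fun i => Fin (n i) → K) q i (ℓ i) (hℓ i) w0 ∈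
        Submodule.map (qIter K (fun i => Fin (n i) → K) q i (ℓ i) (hℓ i))
          (LinearMap.ker (Ti (ℓ i))) := ⟨w0, hw0, rfl⟩
    set x := qIter K (fun i => Fin (n i) → K) q i (ℓ i) (hℓ i) w0 with hxdef
    clear_value x
    clear hxdef hw0 w0
    have hker : ∀ j y, y ∈ Submodule.map (qIter K (fun i => Fin (n i) → K) q j (ℓ j) (hℓ j))
        (LinearMap.ker (Ti (ℓ j))) → Ti j y = 0 := by
      intro j y hy
      obtain ⟨z, hz, rfl⟩ := hy
      have hc := congrArg (fun f => f z) (hcompat j (ℓ j) (hℓ j))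
      simp only [LinearMap.comp_apply] at hc
      rw [← hc, show Ti (ℓ j) z = 0 from hz, map_zero]
    have hsurj : ∀ j y, y ∈ Submodule.map (qIter K (fun i => Fin (n i) → K) q j (ℓ j) (hℓ j))
        (LinearMap.ker (Ti (ℓ j))) →
        ∃ z, z ∈ Submodule.map (qIter K (fun i => Fin (n i) → K) q (j + 1) (ℓ (j + 1))
          (hℓ (j + 1))) (LinearMap.ker (Ti (ℓ (j + 1)))) ∧ q j z = y := by
      intro j y hy
      have h1 : ℓ j ≤ max (ℓ j) (ℓ (j + 1)) := le_max_left _ _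
      have h2 : ℓ (j + 1) ≤ max (ℓ j) (ℓ (j + 1)) := le_max_right _ _
      have e1 := hstab j _ h1
      have e2 := hstab (j + 1) _ h2
      rw [← e1] at hy
      obtain ⟨w, hw, rfl⟩ := hy
      refine ⟨qIter K (fun i => Fin (n i) → K) q (j + 1) _ ((hℓ (j + 1)).trans h2) w, ?_, ?_⟩
      · exact e2 ▸ ⟨w, hw, rfl⟩
      · have hco := qIter_comp K (fun i => Fin (n i) → K) q j (j + 1) (by omega) _
          ((hℓ (j + 1)).trans h2) w
        rw [qIter_succ K (fun i => Fin (n i) → K) q j j le_rfl (by omega),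
          qIter_self] at hco
        exact hco
    have hch : ∀ j (y : Fin (n j) → K), ∃ z : Fin (n (j + 1)) → K,
        y ∈ Submodule.map (qIter K (fun i => Fin (n i) → K) q j (ℓ j) (hℓ j))
          (LinearMap.ker (Ti (ℓ j))) →
        (z ∈ Submodule.map (qIter K (fun i => Fin (n i) → K) q (j + 1) (ℓ (j + 1))
          (hℓ (j + 1))) (LinearMap.ker (Ti (ℓ (j + 1)))) ∧ q j z = y) := by
      intro j y
      by_cases hy : y ∈ Submodule.map (qIter K (fun i => Fin (n i) → K) q j (ℓ j) (hℓ j))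
          (LinearMap.ker (Ti (ℓ j)))
      · obtain ⟨z, hz⟩ := hsurj j y hy
        exact ⟨z, fun _ => hz⟩
      · exact ⟨0, fun h => absurd h hy⟩
    choose g hg using hch
    let u : ∀ k, {y : Fin (n (i + k)) → K //
        y ∈ Submodule.map (qIter K (fun i => Fin (n i) → K) q (i + k) (ℓ (i + k))
          (hℓ (i + k))) (LinearMap.ker (Ti (ℓ (i + k))))} :=
      fun k => Nat.rec ⟨x, hxK⟩ (fun k p => ⟨g (i + k) p.1, (hg (i + k) p.1 p.2).1⟩) k
    have hcons : ∀ k, q (i + k) (u (k + 1)).1 = (u k).1 :=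
      fun k => (hg (i + k) (u k).1 (u k).2).2
    let v : ∀ j, Fin (n j) → K :=
      fun j => qIter K (fun i => Fin (n i) → K) q j (i + j) (Nat.le_add_left j i) (u j).1
    have hvlim : ∀ j, q j (v (j + 1)) = v j := by
      intro j
      show q j (qIter K (fun i => Fin (n i) → K) q (j + 1) ((i + j) + 1)
          (Nat.le_add_left (j + 1) i) (u (j + 1)).1) =
        qIter K (fun i => Fin (n i) → K) q j (i + j) (Nat.le_add_left j i) (u j).1
      have h1 : q j (qIter K (fun i => Fin (n i) → K) q (j + 1) ((i + j) + 1)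
          (Nat.le_add_left (j + 1) i) (u (j + 1)).1) =
          qIter K (fun i => Fin (n i) → K) q j ((i + j) + 1) (by omega) (u (j + 1)).1 := by
        have hco := qIter_comp K (fun i => Fin (n i) → K) q j (j + 1) (by omega)
          ((i + j) + 1) (Nat.le_add_left (j + 1) i) (u (j + 1)).1
        rw [qIter_succ K (fun i => Fin (n i) → K) q j j le_rfl (by omega),
          qIter_self] at hco
        exact hco
      rw [h1, qIter_succ K (fun i => Fin (n i) → K) q j (i + j) (Nat.le_add_left j i)
        (by omega)]
      rw [show q (i + j) (u (j + 1)).1 = (u j).1 from hcons j]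
    have hvi : v i = x := by
      have key : ∀ k (h : i ≤ i + k),
          qIter K (fun i => Fin (n i) → K) q i (i + k) h (u k).1 = x := by
        intro k
        induction k with
        | zero => intro h; exact qIter_self K (fun i => Fin (n i) → K) q i h x
        | succ k ih =>
          intro h
          show qIter K (fun i => Fin (n i) → K) q i ((i + k) + 1) h (u (k + 1)).1 = x
          rw [qIter_succ K (fun i => Fin (n i) → K) q i (i + k) (by omega) h]
          rw [show q (i + k) (u (k + 1)).1 = (u k).1 from hcons k]
          exact ih (by omega)
      exact key i (Nat.le_add_right i i)
    refine ⟨⟨v, hvlim⟩, ?_, hvi⟩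
    apply Subtype.ext
    funext j
    have hz : Ti j (v j) = 0 := by
      show Ti j (qIter K (fun i => Fin (n i) → K) q j (i + j) (Nat.le_add_left j i)
        (u j).1) = 0
      have hc := congrArg (fun f => f (u j).1) (hcompat j (i + j) (Nat.le_add_left j i))
      simp only [LinearMap.comp_apply] at hc
      rw [← hc, hker (i + j) (u j).1 (u j).2, map_zero]
    exact (hcomm j ⟨v, hvlim⟩ :
      (T ⟨v, hvlim⟩).1 j = Ti j (v j)).trans hz
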